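/- arXiv:1203.0047 — 3 statements merged into one kernel-verified Lean document; each statement's English description precedes it below -/
import Mathlib

section
/- Let A ∈ ℝ^{n×n} be Metzler, let B ∈ ℝ^{n×m}, C ∈ ℝ^{r×n}, D ∈ ℝ^{r×m} have nonnegative entries, let γ > 0, and suppose p ∈ ℝ^n satisfies p ≥ 0, Aᵀp + Cᵀ·𝟏 < 0 and Bᵀp + Dᵀ·𝟏 < γ·𝟏 entrywise. Let w : [0,∞) → ℝ^m be continuous and let x : [0,∞) → ℝ^n be differentiable with x(0) = 0 and x′(t) = A x(t) + B w(t). Then for every t ≥ 0: pᵀ|x(t)| + ∫₀ᵗ Σ_k |(C x(τ) + D w(τ))_k| dτ ≤ γ ∫₀ᵗ Σ_k |w_k(τ)| dτ, where |x(t)| denotes the entrywise absolute value. -/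
open Matrix

/-- A real square matrix is *Metzler* if all its off-diagonal entries are nonnegative. -/
def Matrix.Metzler {n : ℕ} (A : Matrix (Fin n) (Fin n) ℝ) : Prop :=
  ∀ i j, i ≠ j → 0 ≤ A i j

/-- A real square matrix is *Hurwitz* if every (complex) eigenvalue has negative real part. -/
def Matrix.Hurwitz {n : ℕ} (A : Matrix (Fin n) (Fin n) ℝ) : Prop :=
  ∀ μ ∈ spectrum ℂ (A.map (Complex.ofReal)), μ.re < 0

/-- A real square matrix is *Schur stable* if every (complex) eigenvalue lies strictly
inside the unit circle. -/
def Matrix.SchurStable {n : ℕ} (A : Matrix (Fin n) (Fin n) ℝ) : Prop :=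
  ∀ μ ∈ spectrum ℂ (A.map (Complex.ofReal)), ‖μ‖ < 1


open MeasureTheory intervalIntegral


lemma aux_sqrt_hasDerivAt {ε : ℝ} (hε : 0 < ε) (u : ℝ) :
    HasDerivAt (fun v : ℝ => Real.sqrt (v ^ 2 + ε ^ 2)) (u / Real.sqrt (u ^ 2 + ε ^ 2)) u := by
  have hpos : 0 < u ^ 2 + ε ^ 2 := by positivity
  have h1 : HasDerivAt (fun v : ℝ => v ^ 2 + ε ^ 2) (2 * u) u := by
    simpa using (hasDerivAt_pow 2 u).add_const (ε ^ 2)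
  have h2 := (Real.hasDerivAt_sqrt hpos.ne').comp u h1
  refine HasDerivAt.congr_deriv h2 ?_
  have hs : Real.sqrt (u ^ 2 + ε ^ 2) ≠ 0 := by positivity
  field_simp

lemma aux_abs_le_sqrt (ε u : ℝ) : |u| ≤ Real.sqrt (u ^ 2 + ε ^ 2) := by
  have h := Real.sqrt_le_sqrt (show u ^ 2 ≤ u ^ 2 + ε ^ 2 by nlinarith [sq_nonneg ε])
  calc |u| = Real.sqrt (u ^ 2) := (Real.sqrt_sq_eq_abs u).symm
    _ ≤ _ := h

lemma aux_sqrt_le {ε : ℝ} (hε : 0 ≤ ε) (u : ℝ) :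
    Real.sqrt (u ^ 2 + ε ^ 2) ≤ |u| + ε := by
  have h : u ^ 2 + ε ^ 2 ≤ (|u| + ε) ^ 2 := by nlinarith [abs_nonneg u, sq_abs u]
  calc Real.sqrt (u ^ 2 + ε ^ 2) ≤ Real.sqrt ((|u| + ε) ^ 2) := Real.sqrt_le_sqrt h
    _ = |u| + ε := Real.sqrt_sq (by positivity)

lemma aux_sigma_abs_le_one {ε : ℝ} (hε : 0 < ε) (u : ℝ) :
    |u / Real.sqrt (u ^ 2 + ε ^ 2)| ≤ 1 := by
  have hs : 0 < Real.sqrt (u ^ 2 + ε ^ 2) := by positivity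
  rw [abs_div, abs_of_nonneg (Real.sqrt_nonneg _), div_le_one hs]
  exact aux_abs_le_sqrt ε u

lemma aux_sigma_mul_ge {ε : ℝ} (hε : 0 < ε) (u : ℝ) :
    |u| - ε ≤ (u / Real.sqrt (u ^ 2 + ε ^ 2)) * u := by
  have hs : 0 < Real.sqrt (u ^ 2 + ε ^ 2) := by positivity
  have heq : (u / Real.sqrt (u ^ 2 + ε ^ 2)) * u = u ^ 2 / Real.sqrt (u ^ 2 + ε ^ 2) := by
    ring
  rw [heq, le_div_iff₀ hs]
  rcases le_or_gt |u| ε with h | h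
  · have h0 : (|u| - ε) * Real.sqrt (u ^ 2 + ε ^ 2) ≤ 0 :=
      mul_nonpos_of_nonpos_of_nonneg (by linarith) hs.le
    nlinarith [sq_nonneg u]
  · have h3 := aux_sqrt_le hε.le u
    calc (|u| - ε) * Real.sqrt (u ^ 2 + ε ^ 2) ≤ (|u| - ε) * (|u| + ε) :=
          mul_le_mul_of_nonneg_left h3 (by linarith)
      _ = u ^ 2 - ε ^ 2 := by nlinarith [sq_abs u]
      _ ≤ u ^ 2 := by nlinarith [sq_nonneg ε]

lemma aux_keybound {n m r : ℕ}
    (A : Matrix (Fin n) (Fin n) ℝ) (B : Matrix (Fin n) (Fin m) ℝ)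
    (C : Matrix (Fin r) (Fin n) ℝ) (D : Matrix (Fin r) (Fin m) ℝ)
    (hA : A.Metzler) (hB : ∀ i j, 0 ≤ B i j) (hC : ∀ i j, 0 ≤ C i j)
    (hD : ∀ i j, 0 ≤ D i j) (γ : ℝ)
    (p : Fin n → ℝ) (hp : ∀ i, 0 ≤ p i)
    (hp1 : ∀ i, (Aᵀ *ᵥ p + Cᵀ *ᵥ fun _ => (1 : ℝ)) i < 0)
    (hp2 : ∀ i, (Bᵀ *ᵥ p + Dᵀ *ᵥ fun _ => (1 : ℝ)) i < γ)
    (ε : ℝ) (hε : 0 ≤ ε)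
    (xv : Fin n → ℝ) (wv : Fin m → ℝ) (σ : Fin n → ℝ)
    (hσ1 : ∀ i, |σ i| ≤ 1) (hσ2 : ∀ i, |xv i| - ε ≤ σ i * xv i) :
    (∑ i, p i * (σ i * (A *ᵥ xv + B *ᵥ wv) i)) + (∑ k, |(C *ᵥ xv + D *ᵥ wv) k|) ≤
      γ * (∑ k, |wv k|) + ε * (∑ i, p i * |A i i|) := by
  have hσ3 : ∀ i u, σ i * u ≤ |u| := by
    intro i u
    calc σ i * u ≤ |σ i * u| := le_abs_self _
      _ = |σ i| * |u| := abs_mul _ _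
      _ ≤ 1 * |u| := mul_le_mul_of_nonneg_right (hσ1 i) (abs_nonneg u)
      _ = |u| := one_mul _
  have stepA : ∀ i, σ i * (A *ᵥ xv) i ≤ (∑ j, A i j * |xv j|) + |A i i| * ε := by
    intro i
    have he : σ i * (A *ᵥ xv) i = ∑ j, σ i * (A i j * xv j) := by
      simp [Matrix.mulVec, dotProduct, Finset.mul_sum]
    rw [he]
    have hb : ∀ j ∈ Finset.univ, σ i * (A i j * xv j) ≤
        A i j * |xv j| + (if j = i then |A i i| * ε else 0) := by
      intro j _
      by_cases hji : j = i
      · subst hji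
        simp only [eq_self_iff_true, if_true]
        rcases le_or_gt 0 (A j j) with h | h
        · have h1 := hσ3 j (xv j)
          have h2 : A j j * (σ j * xv j) ≤ A j j * |xv j| := mul_le_mul_of_nonneg_left h1 h
          have h3 : 0 ≤ |A j j| * ε := mul_nonneg (abs_nonneg _) hε
          nlinarith
        · have h2 := hσ2 j
          have h3 : A j j * (σ j * xv j) ≤ A j j * (|xv j| - ε) :=
            mul_le_mul_of_nonpos_left h2 h.le
          rw [abs_of_neg h]
          nlinarith
      · simp only [if_neg hji]
        have h1 := hσ3 i (xv j)
        have h2 := hA i j (fun hij => hji hij.symm)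
        nlinarith [mul_le_mul_of_nonneg_left h1 h2]
    calc ∑ j, σ i * (A i j * xv j)
        ≤ ∑ j, (A i j * |xv j| + if j = i then |A i i| * ε else 0) := Finset.sum_le_sum hb
      _ = (∑ j, A i j * |xv j|) + |A i i| * ε := by
          rw [Finset.sum_add_distrib]
          simp
  have stepB : ∀ i, σ i * (B *ᵥ wv) i ≤ ∑ k, B i k * |wv k| := by
    intro i
    have he : σ i * (B *ᵥ wv) i = ∑ k, σ i * (B i k * wv k) := by
      simp [Matrix.mulVec, dotProduct, Finset.mul_sum]
    rw [he]
    refine Finset.sum_le_sum fun k _ => ?_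
    have h1 := hσ3 i (wv k)
    nlinarith [mul_le_mul_of_nonneg_left h1 (hB i k)]
  have stepC : ∀ k, |(C *ᵥ xv + D *ᵥ wv) k| ≤
      (∑ j, C k j * |xv j|) + (∑ l, D k l * |wv l|) := by
    intro k
    have he : (C *ᵥ xv + D *ᵥ wv) k = (∑ j, C k j * xv j) + ∑ l, D k l * wv l := by
      simp [Matrix.mulVec, dotProduct]
    rw [he]
    calc |(∑ j, C k j * xv j) + ∑ l, D k l * wv l|
        ≤ |∑ j, C k j * xv j| + |∑ l, D k l * wv l| := abs_add_le _ _
      _ ≤ (∑ j, |C k j * xv j|) + ∑ l, |D k l * wv l| :=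
          add_le_add (Finset.abs_sum_le_sum_abs _ _) (Finset.abs_sum_le_sum_abs _ _)
      _ = (∑ j, C k j * |xv j|) + ∑ l, D k l * |wv l| := by
          congr 1
          · exact Finset.sum_congr rfl fun j _ => by
              rw [abs_mul, abs_of_nonneg (hC k j)]
          · exact Finset.sum_congr rfl fun l _ => by
              rw [abs_mul, abs_of_nonneg (hD k l)]
  -- rearrangement identities
  have e1 : (∑ i, p i * (∑ j, A i j * |xv j|)) = ∑ j, (Aᵀ *ᵥ p) j * |xv j| := by
    simp only [Matrix.mulVec, dotProduct, Matrix.transpose_apply, Finset.mul_sum,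
      Finset.sum_mul]
    rw [Finset.sum_comm]
    exact Finset.sum_congr rfl fun j _ => Finset.sum_congr rfl fun i _ => by ring
  have e2 : (∑ k, ∑ j, C k j * |xv j|) = ∑ j, (Cᵀ *ᵥ fun _ => (1 : ℝ)) j * |xv j| := by
    simp only [Matrix.mulVec, dotProduct, Matrix.transpose_apply, Finset.mul_sum,
      Finset.sum_mul, mul_one]
    rw [Finset.sum_comm]
  have e3 : (∑ i, p i * (∑ k, B i k * |wv k|)) = ∑ k, (Bᵀ *ᵥ p) k * |wv k| := by
    simp only [Matrix.mulVec, dotProduct, Matrix.transpose_apply, Finset.mul_sum,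
      Finset.sum_mul]
    rw [Finset.sum_comm]
    exact Finset.sum_congr rfl fun j _ => Finset.sum_congr rfl fun i _ => by ring
  have e4 : (∑ k, ∑ l, D k l * |wv l|) = ∑ l, (Dᵀ *ᵥ fun _ => (1 : ℝ)) l * |wv l| := by
    simp only [Matrix.mulVec, dotProduct, Matrix.transpose_apply, Finset.mul_sum,
      Finset.sum_mul, mul_one]
    rw [Finset.sum_comm]
  have key1 : (∑ i, p i * (∑ j, A i j * |xv j|)) + (∑ k, ∑ j, C k j * |xv j|) ≤ 0 := by
    rw [e1, e2, ← Finset.sum_add_distrib]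
    refine Finset.sum_nonpos fun j _ => ?_
    have := hp1 j
    simp only [Pi.add_apply] at this
    nlinarith [abs_nonneg (xv j)]
  have key2 : (∑ i, p i * (∑ k, B i k * |wv k|)) + (∑ k, ∑ l, D k l * |wv l|) ≤
      γ * ∑ k, |wv k| := by
    rw [e3, e4, ← Finset.sum_add_distrib, Finset.mul_sum]
    refine Finset.sum_le_sum fun k _ => ?_
    have := hp2 k
    simp only [Pi.add_apply] at this
    nlinarith [abs_nonneg (wv k)]
  have main1 : (∑ i, p i * (σ i * (A *ᵥ xv + B *ᵥ wv) i)) ≤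
      (∑ i, p i * (∑ j, A i j * |xv j|)) + ε * (∑ i, p i * |A i i|) +
        ∑ i, p i * (∑ k, B i k * |wv k|) := by
    have h := Finset.sum_le_sum (s := Finset.univ) fun i (_ : i ∈ Finset.univ) =>
      mul_le_mul_of_nonneg_left
        (show σ i * (A *ᵥ xv + B *ᵥ wv) i ≤
            ((∑ j, A i j * |xv j|) + |A i i| * ε) + ∑ k, B i k * |wv k| by
          have hs : σ i * (A *ᵥ xv + B *ᵥ wv) i = σ i * (A *ᵥ xv) i + σ i * (B *ᵥ wv) i := by
            simp [mul_add]
          rw [hs]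
          exact add_le_add (stepA i) (stepB i)) (hp i)
    calc (∑ i, p i * (σ i * (A *ᵥ xv + B *ᵥ wv) i))
        ≤ ∑ i, p i * (((∑ j, A i j * |xv j|) + |A i i| * ε) + ∑ k, B i k * |wv k|) := h
      _ = (∑ i, p i * (∑ j, A i j * |xv j|)) + ε * (∑ i, p i * |A i i|) +
            ∑ i, p i * (∑ k, B i k * |wv k|) := by
          simp only [mul_add, Finset.sum_add_distrib, Finset.mul_sum]
          congr 1
          congr 1
          exact Finset.sum_congr rfl fun i _ => by ring
  have stepCsum : (∑ k, |(C *ᵥ xv + D *ᵥ wv) k|) ≤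
      (∑ k, ∑ j, C k j * |xv j|) + ∑ k, ∑ l, D k l * |wv l| := by
    rw [← Finset.sum_add_distrib]
    exact Finset.sum_le_sum fun k _ => stepC k
  linarith

/-- Dissipation inequality certifying the `L₁`-induced gain bound: if `A` is Metzler,
`B, C, D ≥ 0`, and `p ≥ 0` satisfies `Aᵀp + Cᵀ𝟏 < 0` and `Bᵀp + Dᵀ𝟏 < γ𝟏` entrywise,
then every solution of `ẋ = Ax + Bw`, `x(0) = 0`, satisfies
`pᵀ|x(t)| + ∫₀ᵗ Σₖ|(Cx + Dw)ₖ| ≤ γ ∫₀ᵗ Σₖ|wₖ|` for all `t ≥ 0`. -/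
theorem positive_system_l1_dissipation {n m r : ℕ}
    (A : Matrix (Fin n) (Fin n) ℝ) (B : Matrix (Fin n) (Fin m) ℝ)
    (C : Matrix (Fin r) (Fin n) ℝ) (D : Matrix (Fin r) (Fin m) ℝ)
    (hA : A.Metzler) (hB : ∀ i j, 0 ≤ B i j) (hC : ∀ i j, 0 ≤ C i j)
    (hD : ∀ i j, 0 ≤ D i j) (γ : ℝ) (hγ : 0 < γ)
    (p : Fin n → ℝ) (hp : ∀ i, 0 ≤ p i)
    (hp1 : ∀ i, (Aᵀ *ᵥ p + Cᵀ *ᵥ fun _ => (1 : ℝ)) i < 0)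
    (hp2 : ∀ i, (Bᵀ *ᵥ p + Dᵀ *ᵥ fun _ => (1 : ℝ)) i < γ)
    (w : ℝ → Fin m → ℝ) (hw_cont : Continuous w)
    (x : ℝ → Fin n → ℝ) (hx0 : x 0 = 0)
    (hx : ∀ t : ℝ, 0 ≤ t → HasDerivAt x (A *ᵥ x t + B *ᵥ w t) t) :
    ∀ t : ℝ, 0 ≤ t →
      (∑ i, p i * |x t i|) + (∫ τ in (0:ℝ)..t, ∑ k, |(C *ᵥ x τ + D *ᵥ w τ) k|) ≤
        γ * ∫ τ in (0:ℝ)..t, ∑ k, |w τ k| := by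
  intro t ht
  set h1 : ℝ → ℝ := fun τ => ∑ k, |(C *ᵥ x τ + D *ᵥ w τ) k| with hh1
  set h2 : ℝ → ℝ := fun τ => ∑ k, |w τ k| with hh2
  set K : ℝ := ∑ i, p i * |A i i| with hK
  -- continuity facts
  have hxcont : ∀ s : ℝ, 0 ≤ s → ContinuousAt x s := fun s hs => (hx s hs).continuousAt
  have hCmul : Continuous (fun v : Fin n → ℝ => C *ᵥ v) := by
    have : (fun v : Fin n → ℝ => C *ᵥ v) = C.mulVecLin := by
      ext v i; simp [Matrix.mulVecLin_apply]
    rw [this]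
    exact LinearMap.continuous_of_finiteDimensional _
  have hDmul : Continuous (fun v : Fin m → ℝ => D *ᵥ v) := by
    have : (fun v : Fin m → ℝ => D *ᵥ v) = D.mulVecLin := by
      ext v i; simp [Matrix.mulVecLin_apply]
    rw [this]
    exact LinearMap.continuous_of_finiteDimensional _
  have habs : Continuous (fun v : Fin r → ℝ => ∑ k, |v k|) :=
    continuous_finset_sum _ fun k _ => continuous_abs.comp (continuous_apply k)
  have h1contAt : ∀ s : ℝ, 0 ≤ s → ContinuousAt h1 s := by
    intro s hs
    have : ContinuousAt (fun τ => C *ᵥ x τ + D *ᵥ w τ) s :=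
      ((hCmul.continuousAt).comp (hxcont s hs)).add
        ((hDmul.continuousAt).comp hw_cont.continuousAt)
    exact (habs.continuousAt).comp this
  have h2cont : Continuous h2 := by
    have habsm : Continuous (fun v : Fin m → ℝ => ∑ k, |v k|) :=
      continuous_finset_sum _ fun k _ => continuous_abs.comp (continuous_apply k)
    exact habsm.comp hw_cont
  have h1OnIoi : ContinuousOn h1 (Set.Ioi (-1 : ℝ) ∩ Set.Ioi 0) := by
    intro s hs
    exact (h1contAt s (le_of_lt hs.2)).continuousWithinAt
  have h1OnIoi' : ContinuousOn h1 (Set.Ioi (0 : ℝ)) := fun s hs =>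
    (h1contAt s (le_of_lt hs)).continuousWithinAt
  have h1OnIcc : ∀ b : ℝ, 0 ≤ b → ContinuousOn h1 (Set.Icc 0 b) := fun b hb s hs =>
    (h1contAt s hs.1).continuousWithinAt
  -- the main estimate with slack ε
  have main : ∀ ε : ℝ, 0 < ε →
      (∑ i, p i * |x t i|) + (∫ τ in (0:ℝ)..t, h1 τ) ≤
        γ * (∫ τ in (0:ℝ)..t, h2 τ) + ε * (K * t + ∑ i, p i) := by
    intro ε hε
    set G : ℝ → ℝ := fun s =>
      (∑ i, p i * (Real.sqrt ((x s i) ^ 2 + ε ^ 2) - ε)) + (∫ τ in (0:ℝ)..s, h1 τ)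
        - γ * (∫ τ in (0:ℝ)..s, h2 τ) - ε * K * s with hG
    -- derivative of G on (0, t)
    have hGderiv : ∀ s ∈ Set.Ioo (0:ℝ) t, HasDerivAt G
        ((∑ i, p i * ((x s i / Real.sqrt ((x s i) ^ 2 + ε ^ 2)) * (A *ᵥ x s + B *ᵥ w s) i))
          + h1 s - γ * h2 s - ε * K) s := by
      intro s hs
      have hs0 : (0:ℝ) < s := hs.1
      have hxs := hx s hs0.le
      have hcomp : ∀ i, HasDerivAt (fun τ => x τ i) ((A *ᵥ x s + B *ᵥ w s) i) s :=
        fun i => hasDerivAt_pi.1 hxs i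
      have hV : HasDerivAt (fun τ => ∑ i, p i * (Real.sqrt ((x τ i) ^ 2 + ε ^ 2) - ε))
          (∑ i, p i * ((x s i / Real.sqrt ((x s i) ^ 2 + ε ^ 2)) * (A *ᵥ x s + B *ᵥ w s) i))
          s := by
        refine HasDerivAt.fun_sum fun i _ => ?_
        exact (((aux_sqrt_hasDerivAt hε (x s i)).comp s (hcomp i)).sub_const ε).const_mul (p i)
      have hI1 : HasDerivAt (fun s => ∫ τ in (0:ℝ)..s, h1 τ) (h1 s) s := by
        refine integral_hasDerivAt_right ?_ ?_ (h1contAt s hs0.le)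
        · apply ContinuousOn.intervalIntegrable
          intro τ hτ
          rw [Set.uIcc_of_le hs0.le] at hτ
          exact (h1contAt τ hτ.1).continuousWithinAt
        · exact (ContinuousOn.stronglyMeasurableAtFilter isOpen_Ioi h1OnIoi' s hs0)
      have hI2 : HasDerivAt (fun s => ∫ τ in (0:ℝ)..s, h2 τ) (h2 s) s := by
        refine integral_hasDerivAt_right (h2cont.intervalIntegrable 0 s) ?_
          h2cont.continuousAt
        exact h2cont.stronglyMeasurable.stronglyMeasurableAtFilter
      have hlin : HasDerivAt (fun s : ℝ => ε * K * s) (ε * K) s := by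
        simpa using (hasDerivAt_id s).const_mul (ε * K)
      exact ((hV.add hI1).sub (hI2.const_mul γ)).sub hlin
    -- G is continuous on [0, t]
    have hGcont : ContinuousOn G (Set.Icc 0 t) := by
      have hxOn : ContinuousOn x (Set.Icc 0 t) := fun s hs =>
        (hxcont s hs.1).continuousWithinAt
      have hVc : ContinuousOn
          (fun s => ∑ i, p i * (Real.sqrt ((x s i) ^ 2 + ε ^ 2) - ε)) (Set.Icc 0 t) := by
        have hg : Continuous (fun v : Fin n → ℝ =>
            ∑ i, p i * (Real.sqrt ((v i) ^ 2 + ε ^ 2) - ε)) := by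
          refine continuous_finset_sum _ fun i _ => Continuous.mul continuous_const ?_
          exact (Real.continuous_sqrt.comp
            (((continuous_apply i).pow 2).add continuous_const)).sub continuous_const
        exact hg.comp_continuousOn hxOn
      have hI1c : ContinuousOn (fun s => ∫ τ in (0:ℝ)..s, h1 τ) (Set.Icc 0 t) := by
        have := intervalIntegral.continuousOn_primitive_interval
          (f := h1) (a := (0:ℝ)) (b := t) (μ := volume) ?_
        · rwa [Set.uIcc_of_le ht] at this
        · rw [Set.uIcc_of_le ht]
          exact (h1OnIcc t ht).integrableOn_Icc
      have hI2c : ContinuousOn (fun s => ∫ τ in (0:ℝ)..s, h2 τ) (Set.Icc 0 t) :=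
        (intervalIntegral.continuous_primitive (fun a b => h2cont.intervalIntegrable a b)
          0).continuousOn
      exact ((hVc.add hI1c).sub (hI2c.const_smul γ)).sub
        ((continuous_const.mul continuous_id).continuousOn)
    -- G is antitone on [0, t]
    have hGanti : AntitoneOn G (Set.Icc 0 t) := by
      refine antitoneOn_of_deriv_nonpos (convex_Icc 0 t) hGcont ?_ ?_
      · intro s hs
        rw [interior_Icc] at hs
        exact ((hGderiv s hs).differentiableAt).differentiableWithinAt
      · intro s hs
        rw [interior_Icc] at hs
        rw [(hGderiv s hs).deriv]
        have hb := aux_keybound A B C D hA hB hC hD γ p hp hp1 hp2 ε hε.le (x s) (w s)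
          (fun i => x s i / Real.sqrt ((x s i) ^ 2 + ε ^ 2))
          (fun i => aux_sigma_abs_le_one hε (x s i))
          (fun i => aux_sigma_mul_ge hε (x s i))
        simp only [hh1, hh2, hK] at *
        linarith
    have hGt : G t ≤ G 0 := hGanti (Set.left_mem_Icc.2 ht) (Set.right_mem_Icc.2 ht) ht
    have hG0 : G 0 = 0 := by
      simp [hG, hx0, Real.sqrt_sq hε.le, intervalIntegral.integral_same]
    rw [hG0] at hGt
    -- |x t i| ≤ sqrt(x^2+ε^2) = (sqrt - ε) + ε
    have hfinal : (∑ i, p i * |x t i|) ≤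
        (∑ i, p i * (Real.sqrt ((x t i) ^ 2 + ε ^ 2) - ε)) + ε * ∑ i, p i := by
      rw [Finset.mul_sum, ← Finset.sum_add_distrib]
      refine Finset.sum_le_sum fun i _ => ?_
      have := aux_abs_le_sqrt ε (x t i)
      nlinarith [hp i]
    have hGt' : (∑ i, p i * (Real.sqrt ((x t i) ^ 2 + ε ^ 2) - ε))
        + (∫ τ in (0:ℝ)..t, h1 τ) - γ * (∫ τ in (0:ℝ)..t, h2 τ) - ε * K * t ≤ 0 := hGt
    nlinarith [hGt', hfinal]
  -- remove the slack
  have hKnn : 0 ≤ K := Finset.sum_nonneg fun i _ => mul_nonneg (hp i) (abs_nonneg _)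
  have hpnn : (0:ℝ) ≤ ∑ i, p i := Finset.sum_nonneg fun i _ => hp i
  refine le_of_forall_pos_le_add fun δ hδ => ?_
  have hc : 0 < K * t + (∑ i, p i) + 1 := by positivity
  have hε : 0 < δ / (K * t + (∑ i, p i) + 1) := div_pos hδ hc
  have := main _ hε
  have hle : (δ / (K * t + (∑ i, p i) + 1)) * (K * t + ∑ i, p i) ≤ δ := by
    rw [div_mul_eq_mul_div, div_le_iff₀ hc]
    nlinarith
  linarith
end

section
/- Let A ∈ ℝ^{n×n}, B ∈ ℝ^{n×m}, C ∈ ℝ^{r×n}, D ∈ ℝ^{r×m} all have nonnegative entries and let γ > 0. Then: (a) the conditions 'A is Schur and (C(I−A)⁻¹B + D)·𝟏 < γ·𝟏 entrywise' hold if and only if there exists ξ ∈ ℝ^n with ξ ≥ 0 such that Aξ + B·𝟏 < ξ and Cξ + D·𝟏 < γ·𝟏 entrywise; (b) the conditions 'A is Schur and (C(I−A)⁻¹B + D)ᵀ·𝟏 < γ·𝟏 entrywise' hold if and only if there exists p ∈ ℝ^n with p ≥ 0 such that Aᵀp + Cᵀ·𝟏 < p and Bᵀp + Dᵀ·𝟏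 < γ·𝟏 entrywise. (Here C(I−A)⁻¹B + D is the static gain of the discrete-time system x(t+1) = Ax(t) + Bw(t), y = Cx + Dw, and the two static-gain conditions express that the ℓ∞-induced gain, respectively the ℓ₁-induced gain, is less than γ.) -/
open Matrix

lemma schur_of_vec {n : ℕ} {A : Matrix (Fin n) (Fin n) ℝ} (hA : ∀ i j, 0 ≤ A i j)
    {ξ : Fin n → ℝ} (hpos : ∀ i, 0 < ξ i) (hlt : ∀ i, (A *ᵥ ξ) i < ξ i) :
    A.SchurStable := by
  intro μ hμ
  rw [spectrum.mem_iff] at hμ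
  set M := A.map (Complex.ofReal) with hM
  have hdet : (algebraMap ℂ (Matrix (Fin n) (Fin n) ℂ) μ - M).det = 0 := by
    by_contra h
    exact hμ ((Matrix.isUnit_iff_isUnit_det _).mpr (isUnit_iff_ne_zero.mpr h))
  obtain ⟨v, hv0, hv⟩ := Matrix.exists_mulVec_eq_zero_iff.mpr hdet
  have heig : M *ᵥ v = μ • v := by
    have h1 : (algebraMap ℂ (Matrix (Fin n) (Fin n) ℂ) μ) *ᵥ v - M *ᵥ v = 0 := by
      rw [← sub_mulVec, hv]
    have h2 : (algebraMap ℂ (Matrix (Fin n) (Fin n) ℂ) μ) *ᵥ v = μ • v := by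
      rw [Algebra.algebraMap_eq_smul_one, smul_mulVec, one_mulVec]
    rw [h2] at h1
    exact (sub_eq_zero.mp h1).symm
  -- pick index maximizing |v i| / ξ i
  obtain ⟨j₀, hvj₀⟩ : ∃ j, v j ≠ 0 := by
    by_contra h
    push_neg at h
    exact hv0 (funext fun i => h i)
  have hne : (Finset.univ : Finset (Fin n)).Nonempty := ⟨j₀, Finset.mem_univ _⟩
  obtain ⟨i₀, -, hmax⟩ := Finset.exists_max_image Finset.univ
    (fun i => ‖v i‖ / ξ i) hne
  have hbound : ∀ j, ‖v j‖ ≤ (‖v i₀‖ / ξ i₀) * ξ j := by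
    intro j
    have h1 := hmax j (Finset.mem_univ j)
    have := mul_le_mul_of_nonneg_right h1 (hpos j).le
    rwa [div_mul_cancel₀ _ (hpos j).ne'] at this
  have hc : 0 < ‖v i₀‖ / ξ i₀ := by
    have h1 := hmax j₀ (Finset.mem_univ j₀)
    have h2 : 0 < ‖v j₀‖ / ξ j₀ :=
      div_pos (by simpa using hvj₀) (hpos j₀)
    linarith
  set c := ‖v i₀‖ / ξ i₀ with hcdef
  have hvi₀ : ‖v i₀‖ = c * ξ i₀ := by
    rw [hcdef, div_mul_cancel₀ _ (hpos i₀).ne']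
  have key : ‖μ‖ * ‖v i₀‖ < ‖v i₀‖ := by
    have h1 : ‖μ‖ * ‖v i₀‖ = ‖(M *ᵥ v) i₀‖ := by
      rw [heig]; simp [Pi.smul_apply, _root_.map_mul]
    have h2 : ‖(M *ᵥ v) i₀‖ ≤ ∑ j, A i₀ j * ‖v j‖ := by
      rw [mulVec, dotProduct]
      refine (norm_sum_le _ _).trans (le_of_eq ?_)
      refine Finset.sum_congr rfl fun j _ => ?_
      rw [norm_mul, hM]
      simp [Matrix.map_apply, Complex.norm_real, abs_of_nonneg (hA i₀ j)]
    have h3 : ∑ j, A i₀ j * ‖v j‖ ≤ c * (A *ᵥ ξ) i₀ := by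
      rw [mulVec, dotProduct, Finset.mul_sum]
      refine Finset.sum_le_sum fun j _ => ?_
      calc A i₀ j * ‖v j‖ ≤ A i₀ j * (c * ξ j) :=
            mul_le_mul_of_nonneg_left (hbound j) (hA i₀ j)
        _ = c * (A i₀ j * ξ j) := by ring
    have h4 : c * (A *ᵥ ξ) i₀ < c * ξ i₀ := by
      exact mul_lt_mul_of_pos_left (hlt i₀) hc
    calc ‖μ‖ * ‖v i₀‖ ≤ c * (A *ᵥ ξ) i₀ := by
          rw [h1]; exact h2.trans h3
      _ < c * ξ i₀ := h4
      _ = ‖v i₀‖ := hvi₀.symm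
  have hvpos : 0 < ‖v i₀‖ := by
    rw [hvi₀]; exact mul_pos hc (hpos i₀)
  exact (mul_lt_iff_lt_one_left hvpos).mp key

lemma pow_nonneg_entries {n : ℕ} {A : Matrix (Fin n) (Fin n) ℝ} (hA : ∀ i j, 0 ≤ A i j) :
    ∀ k i j, 0 ≤ (A ^ k) i j := by
  intro k
  induction k with
  | zero => intro i j; by_cases h : i = j <;> simp [pow_zero, Matrix.one_apply, h]
  | succ k ih =>
    intro i j
    rw [pow_succ', Matrix.mul_apply]
    exact Finset.sum_nonneg fun l _ => mul_nonneg (hA i l) (ih l j)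

lemma neumann_of_vec {n : ℕ} {A : Matrix (Fin n) (Fin n) ℝ} (hA : ∀ i j, 0 ≤ A i j)
    {ξ : Fin n → ℝ} (hpos : ∀ i, 0 < ξ i) (hlt : ∀ i, (A *ᵥ ξ) i < ξ i) :
    ∃ S : Matrix (Fin n) (Fin n) ℝ, (1 - A) * S = 1 ∧ S * (1 - A) = 1 ∧
      (∀ i j, 0 ≤ S i j) ∧ (1 - A)⁻¹ = S ∧
      (∀ i j, HasSum (fun k => (A ^ k) i j) (S i j)) := by
  rcases Nat.eq_zero_or_pos n with hn | hn
  · subst hn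
    refine ⟨0, Subsingleton.elim _ _, Subsingleton.elim _ _, fun i => i.elim0,
      Subsingleton.elim _ _, fun i => i.elim0⟩
  haveI : Nonempty (Fin n) := ⟨⟨0, hn⟩⟩
  have hne : (Finset.univ : Finset (Fin n)).Nonempty := Finset.univ_nonempty
  set θ : ℝ := Finset.univ.sup' hne (fun i => (A *ᵥ ξ) i / ξ i) with hθdef
  have hθ1 : θ < 1 := by
    rw [hθdef, Finset.sup'_lt_iff]
    intro i _
    exact (div_lt_one (hpos i)).mpr (hlt i)
  have hmulnn : ∀ i, 0 ≤ (A *ᵥ ξ) i := by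
    intro i
    rw [mulVec, dotProduct]
    exact Finset.sum_nonneg fun j _ => mul_nonneg (hA i j) (hpos j).le
  have hθ0 : 0 ≤ θ := by
    have := Finset.le_sup' (fun i => (A *ᵥ ξ) i / ξ i)
      (Finset.mem_univ (Classical.arbitrary (Fin n)))
    exact le_trans (div_nonneg (hmulnn _) (hpos _).le) this
  have hAξ : ∀ i, (A *ᵥ ξ) i ≤ θ * ξ i := by
    intro i
    have h1 : (A *ᵥ ξ) i / ξ i ≤ θ :=
      Finset.le_sup' (fun i => (A *ᵥ ξ) i / ξ i) (Finset.mem_univ i)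
    have := mul_le_mul_of_nonneg_right h1 (hpos i).le
    rwa [div_mul_cancel₀ _ (hpos i).ne'] at this
  have hAp := pow_nonneg_entries hA
  have hpow : ∀ k i, (A ^ k *ᵥ ξ) i ≤ θ ^ k * ξ i := by
    intro k
    induction k with
    | zero => intro i; simp [pow_zero, one_mulVec]
    | succ k ih =>
      intro i
      rw [pow_succ', ← mulVec_mulVec]
      calc (A *ᵥ (A ^ k *ᵥ ξ)) i = ∑ j, A i j * (A ^ k *ᵥ ξ) j := rfl
        _ ≤ ∑ j, A i j * (θ ^ k * ξ j) :=
            Finset.sum_le_sum fun j _ => mul_le_mul_of_nonneg_left (ih j) (hA i j)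
        _ = θ ^ k * (A *ᵥ ξ) i := by
            rw [mulVec, dotProduct, Finset.mul_sum]
            exact Finset.sum_congr rfl fun j _ => by ring
        _ ≤ θ ^ k * (θ * ξ i) := mul_le_mul_of_nonneg_left (hAξ i) (pow_nonneg hθ0 k)
        _ = θ ^ (k + 1) * ξ i := by ring
  have hentry : ∀ k i j, (A ^ k) i j ≤ (ξ i / ξ j) * θ ^ k := by
    intro k i j
    have h1 : (A ^ k) i j * ξ j ≤ (A ^ k *ᵥ ξ) i := by
      rw [mulVec, dotProduct]
      exact Finset.single_le_sum (fun l _ => mul_nonneg (hAp k i l) (hpos l).le)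
        (Finset.mem_univ j)
    have h2 : (A ^ k) i j * ξ j ≤ θ ^ k * ξ i := h1.trans (hpow k i)
    rw [div_mul_eq_mul_div, le_div_iff₀ (hpos j), mul_comm (ξ i) (θ ^ k)]
    linarith
  have hsum : ∀ i j, Summable (fun k => (A ^ k) i j) := by
    intro i j
    refine Summable.of_nonneg_of_le (fun k => hAp k i j) (fun k => hentry k i j) ?_
    exact (summable_geometric_of_lt_one hθ0 hθ1).mul_left _
  set S : Matrix (Fin n) (Fin n) ℝ := Matrix.of fun i j => ∑' k, (A ^ k) i j with hSdef
  have hS : ∀ i j, HasSum (fun k => (A ^ k) i j) (S i j) := fun i j => (hsum i j).hasSum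
  have hAS : A * S = S - 1 := by
    ext i j
    rw [Matrix.mul_apply]
    have h1 : ∀ l, A i l * S l j = ∑' k, A i l * (A ^ k) l j := fun l =>
      ((hsum l j).tsum_mul_left _).symm
    have h2 : ∑ l, A i l * S l j = ∑' k, ∑ l, A i l * (A ^ k) l j := by
      calc ∑ l, A i l * S l j = ∑ l, ∑' k, A i l * (A ^ k) l j :=
            Finset.sum_congr rfl fun l _ => h1 l
        _ = ∑' k, ∑ l, A i l * (A ^ k) l j :=
            (Summable.tsum_finsetSum (fun l _ => (hsum l j).mul_left _)).symm
    have h3 : ∀ k : ℕ, ∑ l, A i l * (A ^ k) l j = (A ^ (k + 1)) i j := by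
      intro k; rw [pow_succ', Matrix.mul_apply]
    have h4 : ∑ l, A i l * S l j = ∑' k, (A ^ (k + 1)) i j := by
      rw [h2]; exact tsum_congr h3
    have h5 : ∑' k, (A ^ k) i j = (A ^ 0) i j + ∑' k, (A ^ (k + 1)) i j :=
      Summable.tsum_eq_zero_add (hsum i j)
    rw [h4]
    have : S i j = (A ^ 0) i j + ∑' k, (A ^ (k + 1)) i j := h5
    rw [Matrix.sub_apply]
    rw [this]
    simp [pow_zero]
  have hleft : (1 - A) * S = 1 := by
    rw [Matrix.sub_mul, Matrix.one_mul, hAS, sub_sub_cancel]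
  have hright : S * (1 - A) = 1 := mul_eq_one_comm.mp hleft
  exact ⟨S, hleft, hright, fun i j => tsum_nonneg (fun k => hAp k i j),
    Matrix.inv_eq_right_inv hleft, hS⟩

section Gelfand
attribute [local instance] Matrix.linftyOpNormedRing Matrix.linftyOpNormedAlgebra

-- Step 1: spectral radius < 1 and small power
lemma exists_pow_norm_lt {n : ℕ} {A : Matrix (Fin n) (Fin n) ℝ}
    (hS : A.SchurStable) :
    ∃ k : ℕ, 1 ≤ k ∧ ∃ s : ℝ, 0 < s ∧ s < 1 ∧
      ∀ i, ∑ j, (A ^ k) i j ≤ s := by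
  haveI : CompleteSpace (Matrix (Fin n) (Fin n) ℂ) := FiniteDimensional.complete ℂ _
  set M := A.map (Complex.ofReal) with hM
  -- spectral radius < 1
  have hρ : spectralRadius ℂ M < 1 := by
    have hfin := Matrix.finite_spectrum (R := ℂ) M
    rcases Set.eq_empty_or_nonempty (spectrum ℂ M) with he | hne
    · rw [spectralRadius, he]
      simp
    · obtain ⟨μ₀, hμ₀, hmax⟩ := Set.Finite.exists_maximalFor (fun μ => ‖μ‖) _ (Set.finite_coe_iff.mp hfin) hne
      have hb : ∀ μ ∈ spectrum ℂ M, ‖μ‖ ≤ ‖μ₀‖ := by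
        intro μ hμ
        by_contra h
        push_neg at h
        exact (not_le.mpr h) (hmax hμ h.le)
      have h1 : ‖μ₀‖ < 1 := hS μ₀ hμ₀
      calc spectralRadius ℂ M ≤ ENNReal.ofReal (‖μ₀‖) := by
            refine iSup₂_le fun μ hμ => ?_
            rw [← enorm_eq_nnnorm, ← ofReal_norm]
            exact ENNReal.ofReal_le_ofReal (hb μ hμ)
        _ < 1 := ENNReal.ofReal_lt_one.mpr h1
  -- Gelfand
  have hG := spectrum.pow_nnnorm_pow_one_div_tendsto_nhds_spectralRadius M
  have hev : ∀ᶠ k : ℕ in Filter.atTop,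
      (‖M ^ k‖₊ : ENNReal) ^ (1 / (k : ℝ)) < 1 := by
    exact hG.eventually_lt_const hρ
  obtain ⟨k, hk, hk1⟩ := (hev.and (Filter.eventually_ge_atTop 1)).exists
  -- get ‖M^k‖₊ < 1
  have hnorm : ‖M ^ k‖₊ < 1 := by
    by_contra h
    push_neg at h
    have : (1 : ENNReal) ≤ (‖M ^ k‖₊ : ENNReal) ^ (1 / (k : ℝ)) := by
      refine ENNReal.one_le_rpow ?_ ?_
      · exact_mod_cast h
      · positivity
    exact absurd hk (not_lt.mpr this)
  -- transfer to real row sums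
  have hMk : M ^ k = (A ^ k).map Complex.ofReal := by
    have h0 : M = Complex.ofRealHom.mapMatrix A := by
      rw [RingHom.mapMatrix_apply]; rfl
    rw [h0, ← map_pow, RingHom.mapMatrix_apply]; rfl
  have hnormR : ‖M ^ k‖ < 1 := hnorm
  refine ⟨k, hk1, max ‖M ^ k‖ (1/2), lt_max_of_lt_right (by norm_num),
    max_lt hnormR (by norm_num), fun i => ?_⟩
  have hle : ∑ j, ‖(M ^ k) i j‖₊ ≤ ‖M ^ k‖₊ := by
    rw [Matrix.linfty_opNNNorm_def]
    exact Finset.le_sup (f := fun i => ∑ j, ‖(M ^ k) i j‖₊) (Finset.mem_univ i)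
  have hleR : ∑ j, ‖(M ^ k) i j‖ ≤ ‖M ^ k‖ := by
    have := NNReal.coe_le_coe.mpr hle
    simpa [NNReal.coe_sum] using this
  have h2 : ∑ j, (A ^ k) i j ≤ ∑ j, ‖(M ^ k) i j‖ := by
    refine Finset.sum_le_sum fun j _ => ?_
    rw [hMk, Matrix.map_apply, Complex.norm_real, Real.norm_eq_abs]
    exact le_abs_self _
  exact le_trans (h2.trans hleR) (le_max_left _ _)

end Gelfand


lemma vec_of_schur {n : ℕ} {A : Matrix (Fin n) (Fin n) ℝ} (hA : ∀ i j, 0 ≤ A i j)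
    (hS : A.SchurStable) :
    ∃ ξ : Fin n → ℝ, (∀ i, 0 < ξ i) ∧ ∀ i, (A *ᵥ ξ) i < ξ i := by
  obtain ⟨k, hk1, s, hs0, hs1, hrow⟩ := exists_pow_norm_lt hS
  obtain ⟨k', rfl⟩ : ∃ k', k = k' + 1 := ⟨k - 1, (Nat.succ_pred_eq_of_pos hk1).symm⟩
  set θ : ℝ := s ^ ((1 : ℝ) / (k' + 1 : ℕ)) with hθdef
  have hθ0 : 0 < θ := Real.rpow_pos_of_pos hs0 _
  have hθ1 : θ < 1 := Real.rpow_lt_one hs0.le hs1 (by positivity)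
  have hθk : θ ^ (k' + 1) = s := by
    rw [hθdef, ← Real.rpow_natCast (s ^ ((1:ℝ)/(k'+1:ℕ))) (k'+1), ← Real.rpow_mul hs0.le,
      one_div_mul_cancel (by exact_mod_cast Nat.succ_ne_zero k'), Real.rpow_one]
  set w : ℕ → Fin n → ℝ := fun j => A ^ j *ᵥ (fun _ => (1:ℝ)) with hwdef
  have hw0 : ∀ i, w 0 i = 1 := by
    intro i; simp [hwdef, pow_zero, one_mulVec]
  have hwnn : ∀ j i, 0 ≤ w j i := by
    intro j i
    have h : w j i = ∑ l, (A ^ j) i l * 1 := rfl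
    rw [h]
    exact Finset.sum_nonneg fun l _ => mul_nonneg (pow_nonneg_entries hA j i l) zero_le_one
  have hwK : ∀ i, w (k' + 1) i ≤ s := by
    intro i
    have : w (k' + 1) i = ∑ j, (A ^ (k' + 1)) i j := by
      rw [hwdef]; simp [mulVec, dotProduct]
    rw [this]; exact hrow i
  set ξ : Fin n → ℝ := ∑ j ∈ Finset.range (k' + 1), θ ^ (k' - j) • w j with hξdef
  have hξapp : ∀ i, ξ i = ∑ j ∈ Finset.range (k' + 1), θ ^ (k' - j) * w j i := by
    intro i
    rw [hξdef]
    simp [Finset.sum_apply]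
  have hξpos : ∀ i, 0 < ξ i := by
    intro i
    rw [hξapp i]
    have h1 : θ ^ (k' - 0) * w 0 i ≤ ∑ j ∈ Finset.range (k' + 1), θ ^ (k' - j) * w j i :=
      Finset.single_le_sum (fun j _ => mul_nonneg (pow_nonneg hθ0.le _) (hwnn j i))
        (Finset.mem_range.mpr (Nat.succ_pos _))
    have h2 : 0 < θ ^ (k' - 0) * w 0 i := by
      rw [hw0 i, mul_one]; exact pow_pos hθ0 _
    linarith
  refine ⟨ξ, hξpos, fun i => ?_⟩
  have hAξ : (A *ᵥ ξ) i = ∑ j ∈ Finset.range (k' + 1), θ ^ (k' - j) * w (j + 1) i := by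
    have : A *ᵥ ξ = ∑ j ∈ Finset.range (k' + 1), θ ^ (k' - j) • w (j + 1) := by
      rw [hξdef, ← Matrix.mulVecLin_apply, map_sum]
      refine Finset.sum_congr rfl fun j _ => ?_
      rw [_root_.map_smul, Matrix.mulVecLin_apply, hwdef]
      congr 1
      rw [mulVec_mulVec, ← pow_succ']
    rw [this]; simp [Finset.sum_apply]
  have hθξ : θ * ξ i = ∑ j ∈ Finset.range (k' + 1), θ ^ (k' + 1 - j) * w j i := by
    rw [hξapp i, Finset.mul_sum]
    refine Finset.sum_congr rfl fun j hj => ?_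
    rw [Finset.mem_range] at hj
    rw [← mul_assoc, ← pow_succ']
    congr 2
    omega
  have hkey : (A *ᵥ ξ) i ≤ θ * ξ i := by
    rw [hAξ, hθξ, Finset.sum_range_succ, Finset.sum_range_succ']
    have he1 : ∀ j, j < k' → (k' - j) = (k' + 1 - (j + 1)) := fun j hj => by omega
    have h1 : ∑ j ∈ Finset.range k', θ ^ (k' - j) * w (j + 1) i
        = ∑ j ∈ Finset.range k', θ ^ (k' + 1 - (j + 1)) * w (j + 1) i := by
      refine Finset.sum_congr rfl fun j hj => ?_
      rw [Finset.mem_range] at hj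
      rw [he1 j hj]
    rw [h1]
    have h2 : θ ^ (k' - k') * w (k' + 1) i ≤ θ ^ (k' + 1 - 0) * w 0 i := by
      rw [Nat.sub_self, pow_zero, one_mul, hw0, mul_one, Nat.sub_zero, hθk]
      exact hwK i
    linarith
  calc (A *ᵥ ξ) i ≤ θ * ξ i := hkey
    _ < 1 * ξ i := mul_lt_mul_of_pos_right hθ1 (hξpos i)
    _ = ξ i := one_mul _


lemma spectrum_transpose {n : ℕ} (M : Matrix (Fin n) (Fin n) ℂ) :
    spectrum ℂ Mᵀ = spectrum ℂ M := by
  ext μ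
  rw [spectrum.mem_iff, spectrum.mem_iff]
  have h : (algebraMap ℂ (Matrix (Fin n) (Fin n) ℂ) μ - Mᵀ)
      = (algebraMap ℂ (Matrix (Fin n) (Fin n) ℂ) μ - M)ᵀ := by
    rw [transpose_sub]
    congr 1
    rw [Algebra.algebraMap_eq_smul_one, transpose_smul, transpose_one]
  rw [h, Matrix.isUnit_iff_isUnit_det, det_transpose, ← Matrix.isUnit_iff_isUnit_det]

lemma schurStable_transpose_iff {n : ℕ} (A : Matrix (Fin n) (Fin n) ℝ) :
    Aᵀ.SchurStable ↔ A.SchurStable := by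
  unfold Matrix.SchurStable
  rw [Matrix.transpose_map, spectrum_transpose]

lemma gain_partA {n m r : ℕ}
    (A : Matrix (Fin n) (Fin n) ℝ) (B : Matrix (Fin n) (Fin m) ℝ)
    (C : Matrix (Fin r) (Fin n) ℝ) (D : Matrix (Fin r) (Fin m) ℝ)
    (hA : ∀ i j, 0 ≤ A i j) (hB : ∀ i j, 0 ≤ B i j) (hC : ∀ i j, 0 ≤ C i j)
    (hD : ∀ i j, 0 ≤ D i j) (γ : ℝ) (hγ : 0 < γ) :
    (A.SchurStable ∧ ∀ i, ((C * (1 - A)⁻¹ * B + D) *ᵥ fun _ => (1 : ℝ)) i < γ) ↔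
      (∃ ξ : Fin n → ℝ, (∀ i, 0 ≤ ξ i) ∧
        (∀ i, (A *ᵥ ξ + B *ᵥ fun _ => (1 : ℝ)) i < ξ i) ∧
        (∀ i, (C *ᵥ ξ + D *ᵥ fun _ => (1 : ℝ)) i < γ)) := by
  have hBu : ∀ i, 0 ≤ (B *ᵥ fun _ => (1 : ℝ)) i := by
    intro i
    have h : (B *ᵥ fun _ => (1:ℝ)) i = ∑ j, B i j * 1 := rfl
    rw [h]
    exact Finset.sum_nonneg fun j _ => mul_nonneg (hB i j) zero_le_one
  constructor
  · rintro ⟨hS, hg⟩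
    obtain ⟨ξ0, hξ0pos, hξ0lt⟩ := vec_of_schur hA hS
    obtain ⟨S, hleft, hright, hSnn, hSinv, -⟩ := neumann_of_vec hA hξ0pos hξ0lt
    rw [hSinv] at hg
    have hAS : A * S = S - 1 := by
      have h := hleft
      rw [Matrix.sub_mul, Matrix.one_mul] at h
      rw [← h]; abel
    set u : Fin n → ℝ := B *ᵥ fun _ => (1:ℝ) with hu
    set Gv : Fin r → ℝ := (C * S * B + D) *ᵥ fun _ => (1:ℝ) with hGv
    set cξ : Fin r → ℝ := C *ᵥ ξ0 with hcξ
    have hcξnn : ∀ i, 0 ≤ cξ i := by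
      intro i
      have h : cξ i = ∑ j, C i j * ξ0 j := rfl
      rw [h]
      exact Finset.sum_nonneg fun j _ => mul_nonneg (hC i j) (hξ0pos j).le
    set g : Fin r → ℝ := fun i => (γ - Gv i) / (cξ i + 1) with hg_def
    have hgpos : ∀ i, 0 < g i := fun i =>
      div_pos (sub_pos.mpr (hg i)) (by linarith [hcξnn i])
    set F : Finset ℝ := insert 1 (Finset.univ.image g) with hF
    have hFne : F.Nonempty := ⟨1, Finset.mem_insert_self _ _⟩
    set ε : ℝ := F.min' hFne with hε
    have hε0 : 0 < ε := by
      rw [hε, Finset.lt_min'_iff]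
      intro y hy
      rw [hF, Finset.mem_insert] at hy
      rcases hy with rfl | hy
      · norm_num
      · obtain ⟨i, -, rfl⟩ := Finset.mem_image.mp hy
        exact hgpos i
    have hεg : ∀ i, ε ≤ g i := fun i =>
      Finset.min'_le _ _ (Finset.mem_insert_of_mem (Finset.mem_image_of_mem g (Finset.mem_univ i)))
    refine ⟨S *ᵥ u + ε • ξ0, ?_, ?_, ?_⟩
    · intro i
      have h1 : (S *ᵥ u) i = ∑ l, S i l * u l := rfl
      have h2 : 0 ≤ (S *ᵥ u) i := by
        rw [h1]; exact Finset.sum_nonneg fun l _ => mul_nonneg (hSnn i l) (hBu l)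
      have h3 : 0 ≤ ε * ξ0 i := mul_nonneg hε0.le (hξ0pos i).le
      simpa using add_nonneg h2 h3
    · intro i
      have hAv : A *ᵥ (S *ᵥ u + ε • ξ0) = (S *ᵥ u - u) + ε • (A *ᵥ ξ0) := by
        rw [mulVec_add, mulVec_smul, mulVec_mulVec, hAS, sub_mulVec, one_mulVec]
      have h := hξ0lt i
      simp only [hAv, Pi.add_apply, Pi.sub_apply, Pi.smul_apply, smul_eq_mul]
      have : ε * (A *ᵥ ξ0) i < ε * ξ0 i := mul_lt_mul_of_pos_left h hε0
      linarith
    · intro i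
      have hCv : C *ᵥ (S *ᵥ u + ε • ξ0) = (C * S * B) *ᵥ (fun _ => (1:ℝ)) + ε • cξ := by
        rw [mulVec_add, mulVec_smul, hu, mulVec_mulVec, mulVec_mulVec, hcξ]
      have hGsplit : Gv i = ((C * S * B) *ᵥ (fun _ => (1:ℝ))) i + (D *ᵥ fun _ => (1:ℝ)) i := by
        rw [hGv, add_mulVec, Pi.add_apply]
      have hcmp : ε * cξ i < γ - Gv i := by
        have h1 : ε * cξ i ≤ g i * cξ i := mul_le_mul_of_nonneg_right (hεg i) (hcξnn i)
        have h2 : g i * cξ i < g i * (cξ i + 1) := by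
          have := hgpos i; nlinarith
        have h3 : g i * (cξ i + 1) = γ - Gv i := by
          rw [hg_def]
          exact div_mul_cancel₀ _ (by linarith [hcξnn i])
        linarith
      simp only [hCv, Pi.add_apply, Pi.smul_apply, smul_eq_mul]
      linarith [hGsplit, hcmp]
  · rintro ⟨ξ, h0, h1, h2⟩
    have hξpos : ∀ i, 0 < ξ i := by
      intro i
      have hAξnn : 0 ≤ (A *ᵥ ξ) i := by
        have h : (A *ᵥ ξ) i = ∑ j, A i j * ξ j := rfl
        rw [h]
        exact Finset.sum_nonneg fun j _ => mul_nonneg (hA i j) (h0 j)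
      have := h1 i
      simp only [Pi.add_apply] at this
      linarith [hBu i]
    have hAξ : ∀ i, (A *ᵥ ξ) i < ξ i := by
      intro i
      have := h1 i
      simp only [Pi.add_apply] at this
      linarith [hBu i]
    obtain ⟨S, hleft, hright, hSnn, hSinv, -⟩ := neumann_of_vec hA hξpos hAξ
    refine ⟨schur_of_vec hA hξpos hAξ, ?_⟩
    rw [hSinv]
    intro i
    set u : Fin n → ℝ := B *ᵥ fun _ => (1:ℝ) with hu
    set y : Fin n → ℝ := S *ᵥ u with hy
    set w : Fin n → ℝ := (1 - A) *ᵥ ξ - u with hwdef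
    have hw : ∀ l, 0 ≤ w l := by
      intro l
      have := h1 l
      simp only [Pi.add_apply] at this
      rw [hwdef]
      simp only [Pi.sub_apply, sub_mulVec, one_mulVec, Pi.sub_apply]
      linarith
    have hyξ : ∀ l, y l ≤ ξ l := by
      intro l
      have hvec : ξ - y = S *ᵥ w := by
        rw [hwdef, mulVec_sub, mulVec_mulVec, hright, one_mulVec, hy]
      have hnn : 0 ≤ (S *ᵥ w) l := by
        have h : (S *ᵥ w) l = ∑ j, S l j * w j := rfl
        rw [h]
        exact Finset.sum_nonneg fun j _ => mul_nonneg (hSnn l j) (hw j)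
      have := congrFun hvec l
      simp only [Pi.sub_apply] at this
      linarith [hnn, this.symm ▸ hnn]
    have hsplit : ((C * S * B + D) *ᵥ fun _ => (1:ℝ)) i
        = (C *ᵥ y) i + (D *ᵥ fun _ => (1:ℝ)) i := by
      rw [add_mulVec, Pi.add_apply, hy, hu, ← mulVec_mulVec, ← mulVec_mulVec]
    have hmono : (C *ᵥ y) i ≤ (C *ᵥ ξ) i := by
      have hl : (C *ᵥ y) i = ∑ j, C i j * y j := rfl
      have hr : (C *ᵥ ξ) i = ∑ j, C i j * ξ j := rfl
      rw [hl, hr]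
      exact Finset.sum_le_sum fun j _ => mul_le_mul_of_nonneg_left (hyξ j) (hC i j)
    have := h2 i
    simp only [Pi.add_apply] at this
    linarith [hsplit, hmono]

/-- Discrete-time performance of positive systems: for nonnegative `A, B, C, D`,
(a) `A` is Schur with `(C(I-A)⁻¹B + D) 𝟏 < γ 𝟏` iff there is `ξ ≥ 0` with
`Aξ + B𝟏 < ξ` and `Cξ + D𝟏 < γ𝟏`; (b) `A` is Schur with `(C(I-A)⁻¹B + D)ᵀ 𝟏 < γ 𝟏`
iff there is `p ≥ 0` with `Aᵀp + Cᵀ𝟏 < p` and `Bᵀp + Dᵀ𝟏 < γ𝟏` (all entrywise). -/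
theorem discrete_positive_system_gain_iff {n m r : ℕ}
    (A : Matrix (Fin n) (Fin n) ℝ) (B : Matrix (Fin n) (Fin m) ℝ)
    (C : Matrix (Fin r) (Fin n) ℝ) (D : Matrix (Fin r) (Fin m) ℝ)
    (hA : ∀ i j, 0 ≤ A i j) (hB : ∀ i j, 0 ≤ B i j) (hC : ∀ i j, 0 ≤ C i j)
    (hD : ∀ i j, 0 ≤ D i j) (γ : ℝ) (hγ : 0 < γ) :
    ((A.SchurStable ∧ ∀ i, ((C * (1 - A)⁻¹ * B + D) *ᵥ fun _ => (1 : ℝ)) i < γ) ↔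
      (∃ ξ : Fin n → ℝ, (∀ i, 0 ≤ ξ i) ∧
        (∀ i, (A *ᵥ ξ + B *ᵥ fun _ => (1 : ℝ)) i < ξ i) ∧
        (∀ i, (C *ᵥ ξ + D *ᵥ fun _ => (1 : ℝ)) i < γ))) ∧
    ((A.SchurStable ∧ ∀ i, ((C * (1 - A)⁻¹ * B + D)ᵀ *ᵥ fun _ => (1 : ℝ)) i < γ) ↔
      (∃ p : Fin n → ℝ, (∀ i, 0 ≤ p i) ∧
        (∀ i, (Aᵀ *ᵥ p + Cᵀ *ᵥ fun _ => (1 : ℝ)) i < p i) ∧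
        (∀ i, (Bᵀ *ᵥ p + Dᵀ *ᵥ fun _ => (1 : ℝ)) i < γ))) := by
  constructor
  · exact gain_partA A B C D hA hB hC hD γ hγ
  · have h1 := gain_partA Aᵀ Cᵀ Bᵀ Dᵀ (fun i j => hA j i) (fun i j => hC j i)
      (fun i j => hB j i) (fun i j => hD j i) γ hγ
    have hT : (C * (1 - A)⁻¹ * B + D)ᵀ = Bᵀ * (1 - Aᵀ)⁻¹ * Cᵀ + Dᵀ := by
      rw [transpose_add, transpose_mul, transpose_mul, transpose_nonsing_inv,
        transpose_sub, transpose_one, Matrix.mul_assoc]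
    rw [hT, ← schurStable_transpose_iff A]
    exact h1
end

section
/- Let M ∈ ℝ^{n×n} be a Metzler matrix and let X = (x_{ij}) ∈ ℝ^{n×n} be a symmetric matrix satisfying x_{ii} ≥ 0 for all i and x_{ij}² ≤ x_{ii} x_{jj} for all i, j. Define the vector x = (√x_{11}, …, √x_{nn}) ∈ ℝ^n. Then xᵀ M x ≥ trace(M X). In particular, since every positive semidefinite X satisfies these conditions, the inequality holds for every positive semidefinite X; and conversely, for any x ∈ ℝ^n with x ≥ 0, the rank-one matrix X = x xᵀ is positive semidefinite with trace(M X) = xᵀ M x. -/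
open Matrix

lemma psd_diag_nonneg {n : ℕ} {X : Matrix (Fin n) (Fin n) ℝ} (hX : X.PosSemidef) (i : Fin n) :
    0 ≤ X i i := by
  have h := hX.dotProduct_mulVec_nonneg (Pi.single i 1)
  have hstar : (star (Pi.single i 1) : Fin n → ℝ) = Pi.single i 1 := rfl
  rw [hstar] at h
  simp only [dotProduct, Matrix.mulVec, dotProduct] at h
  rw [Finset.sum_eq_single i (by intro b _ hb; simp [Pi.single_eq_of_ne hb]) (by simp)] at h
  simp only [Pi.single_eq_same, one_mul] at h
  rwa [Finset.sum_eq_single i (by intro b _ hb; simp [Pi.single_eq_of_ne hb]) (by simp),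
    Pi.single_eq_same, mul_one] at h

lemma psd_sq_le {n : ℕ} {X : Matrix (Fin n) (Fin n) ℝ} (hX : X.PosSemidef) (i j : Fin n) :
    (X i j) ^ 2 ≤ X i i * X j j := by
  rcases eq_or_ne i j with rfl | hij
  · rw [sq]
  have hsym : X j i = X i j := by
    have h := hX.1
    have := congrFun (congrFun h i) j
    simpa [Matrix.conjTranspose_apply] using this
  have key : ∀ t : ℝ, 0 ≤ X i i * (t * t) + (2 * X i j) * t + X j j := by
    intro t
    have h0 := hX.dotProduct_mulVec_nonneg (Pi.single i t + Pi.single j 1)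
    have hv : ∀ v : Fin n → ℝ, star v = v := fun v => rfl
    rw [hv] at h0
    have hm : ∀ (w : Fin n → ℝ), X *ᵥ w = fun k => ∑ l, X k l * w l := by
      intro w; rfl
    simp only [dotProduct, Matrix.mulVec, dotProduct] at h0
    have hexp : ∑ k, (Pi.single i t + Pi.single j 1 : Fin n → ℝ) k *
        ∑ l, X k l * (Pi.single i t + Pi.single j 1 : Fin n → ℝ) l
        = X i i * (t * t) + (2 * X i j) * t + X j j := by
      have h1 : ∀ k, (∑ l, X k l * (Pi.single i t + Pi.single j 1 : Fin n → ℝ) l)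
          = X k i * t + X k j := by
        intro k
        have : ∀ l, X k l * (Pi.single i t + Pi.single j 1 : Fin n → ℝ) l
            = X k l * (Pi.single i t : Fin n → ℝ) l + X k l * (Pi.single j 1 : Fin n → ℝ) l := by
          intro l; simp [Pi.add_apply, mul_add]
        rw [Finset.sum_congr rfl fun l _ => this l, Finset.sum_add_distrib]
        congr 1
        · rw [Finset.sum_eq_single i]
          · simp
          · intro b _ hb; simp [Pi.single_eq_of_ne hb]
          · simp
        · rw [Finset.sum_eq_single j]
          · simp
          · intro b _ hb; simp [Pi.single_eq_of_ne hb]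
          · simp
      rw [Finset.sum_congr rfl fun k _ => by rw [h1 k]]
      have : ∀ k, (Pi.single i t + Pi.single j 1 : Fin n → ℝ) k * (X k i * t + X k j)
          = (Pi.single i t : Fin n → ℝ) k * (X k i * t + X k j)
            + (Pi.single j 1 : Fin n → ℝ) k * (X k i * t + X k j) := by
        intro k; simp [Pi.add_apply, add_mul]
      rw [Finset.sum_congr rfl fun k _ => this k, Finset.sum_add_distrib]
      rw [Finset.sum_eq_single i (by intro b _ hb; simp [Pi.single_eq_of_ne hb]) (by simp)]
      rw [Finset.sum_eq_single j (by intro b _ hb; simp [Pi.single_eq_of_ne hb]) (by simp)]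
      simp only [Pi.single_eq_same]
      rw [hsym]
      ring
    rw [hexp] at h0
    exact h0
  have hd := discrim_le_zero key
  rw [discrim] at hd
  nlinarith [hd]

/-- Positive quadratic programming relaxation (key step of Proposition 3 of the paper):
for a Metzler `M` and any symmetric `X` with `Xᵢᵢ ≥ 0` and `Xᵢⱼ² ≤ Xᵢᵢ Xⱼⱼ`, the vector
`x = (√X₁₁, …, √Xₙₙ)` satisfies `xᵀMx ≥ trace(MX)`. In particular this holds for every
positive semidefinite `X`; conversely, for `x ≥ 0` the matrix `X = xxᵀ` is positive
semidefinite with `trace(MX) = xᵀMx`. -/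
theorem metzler_trace_le_sqrt_diag_quadform {n : ℕ}
    (M : Matrix (Fin n) (Fin n) ℝ) (hM : M.Metzler) :
    (∀ X : Matrix (Fin n) (Fin n) ℝ, Xᵀ = X → (∀ i, 0 ≤ X i i) →
      (∀ i j, (X i j) ^ 2 ≤ X i i * X j j) →
      (M * X).trace ≤ (fun i => Real.sqrt (X i i)) ⬝ᵥ M *ᵥ fun i => Real.sqrt (X i i)) ∧
    (∀ X : Matrix (Fin n) (Fin n) ℝ, X.PosSemidef →
      (M * X).trace ≤ (fun i => Real.sqrt (X i i)) ⬝ᵥ M *ᵥ fun i => Real.sqrt (X i i)) ∧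
    (∀ x : Fin n → ℝ, (∀ i, 0 ≤ x i) →
      (Matrix.vecMulVec x x).PosSemidef ∧
      (M * Matrix.vecMulVec x x).trace = x ⬝ᵥ M *ᵥ x) := by
  have main : ∀ X : Matrix (Fin n) (Fin n) ℝ, Xᵀ = X → (∀ i, 0 ≤ X i i) →
      (∀ i j, (X i j) ^ 2 ≤ X i i * X j j) →
      (M * X).trace ≤ (fun i => Real.sqrt (X i i)) ⬝ᵥ M *ᵥ fun i => Real.sqrt (X i i) := by
    intro X _ hdiag hsq
    have hlhs : (M * X).trace = ∑ i, ∑ j, M i j * X j i := by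
      simp [Matrix.trace, Matrix.diag, Matrix.mul_apply]
    have hrhs : (fun i => Real.sqrt (X i i)) ⬝ᵥ M *ᵥ (fun i => Real.sqrt (X i i))
        = ∑ i, ∑ j, Real.sqrt (X i i) * (M i j * Real.sqrt (X j j)) := by
      simp [dotProduct, Matrix.mulVec, Finset.mul_sum]
    rw [hlhs, hrhs]
    refine Finset.sum_le_sum fun i _ => Finset.sum_le_sum fun j _ => ?_
    rcases eq_or_ne i j with rfl | hij
    · apply le_of_eq
      have h := Real.mul_self_sqrt (hdiag i)
      linear_combination (-(M i i)) * h
    · have hMij := hM i j hij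
      have hXle : X j i ≤ Real.sqrt (X i i) * Real.sqrt (X j j) := by
        have h1 : X j i ≤ |X j i| := le_abs_self _
        have h2 : |X j i| = Real.sqrt ((X j i) ^ 2) := (Real.sqrt_sq_eq_abs _).symm
        have h3 : Real.sqrt ((X j i) ^ 2) ≤ Real.sqrt (X j j * X i i) :=
          Real.sqrt_le_sqrt (hsq j i)
        calc X j i ≤ Real.sqrt ((X j i) ^ 2) := h2 ▸ h1
          _ ≤ Real.sqrt (X j j * X i i) := h3
          _ = Real.sqrt (X i i) * Real.sqrt (X j j) := by
              rw [mul_comm (X j j), Real.sqrt_mul (hdiag i)]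
      calc M i j * X j i ≤ M i j * (Real.sqrt (X i i) * Real.sqrt (X j j)) :=
            mul_le_mul_of_nonneg_left hXle hMij
        _ = Real.sqrt (X i i) * (M i j * Real.sqrt (X j j)) := by ring
  refine ⟨main, fun X hX => main X (by
      have h := hX.1
      ext i j
      have := congrFun (congrFun h i) j
      simpa [Matrix.conjTranspose_apply] using this)
      (psd_diag_nonneg hX) (psd_sq_le hX), fun x hx => ?_⟩
  constructor
  · refine Matrix.PosSemidef.of_dotProduct_mulVec_nonneg ?_ fun v => ?_
    · ext i j
      simp [Matrix.conjTranspose_apply, Matrix.vecMulVec_apply, mul_comm]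
    · have : star v ⬝ᵥ (Matrix.vecMulVec x x *ᵥ v) = (x ⬝ᵥ v) * (x ⬝ᵥ v) := by
        have hstar : (star v : Fin n → ℝ) = v := rfl
        rw [hstar]
        simp only [dotProduct, Matrix.mulVec, Matrix.vecMulVec_apply,
          dotProduct, Finset.mul_sum]
        refine Finset.sum_congr rfl fun i _ => ?_
        rw [Finset.sum_mul]
        exact Finset.sum_congr rfl fun j _ => by ring
      rw [this]
      exact mul_self_nonneg _
  · have : (M * Matrix.vecMulVec x x).trace = ∑ i, ∑ j, M i j * (x j * x i) := by
      simp [Matrix.trace, Matrix.diag, Matrix.mul_apply, Matrix.vecMulVec_apply]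
    rw [this]
    simp only [dotProduct, Matrix.mulVec, dotProduct, Finset.mul_sum]
    refine Finset.sum_congr rfl fun i _ => Finset.sum_congr rfl fun j _ => ?_
    ring
end
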